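/- Let A₁,…,Aₙ be compatible observables and G a joint observable on Ω̃ = Ω₁×⋯×Ωₙ. Then G is a minimal joint observable if and only if for every Markov kernel p ∈ K_G (i.e. p∗G is again a joint observable) and all x⃗₁, x⃗₂, x⃗' ∈ Ω̃: if G(x⃗₁) and G(x⃗₂) are linearly independent operators, then p(x⃗', x⃗₁)·p(x⃗', x⃗₂) = 0. -/

import Mathlib

noncomputable section

open scoped BigOperators

variable {H : Type*} [NormedAddCommGroup H] [InnerProductSpace ℂ H] [CompleteSpace H]

/-- A Markov kernel from `Ω₂` to `Ω₁`: nonnegative entries, columns summing to 1. -/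
def IsMarkov {Ω₁ Ω₂ : Type*} [Fintype Ω₁] (p : Ω₁ → Ω₂ → ℝ) : Prop :=
  (∀ x y, 0 ≤ p x y) ∧ ∀ y, ∑ x, p x y = 1

/-- A finite-outcome observable (POVM): positive operators summing to the identity. -/
def IsObservable {Ω : Type*} [Fintype Ω] (A : Ω → H →L[ℂ] H) : Prop :=
  (∀ x, (A x).IsPositive) ∧ ∑ x, A x = 1

/-- Post-processing of `A` by the kernel `p`. -/
def pproc {Ω₁ Ω₂ : Type*} [Fintype Ω₂] (p : Ω₁ → Ω₂ → ℝ) (A : Ω₂ → H →L[ℂ] H) :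
    Ω₁ → H →L[ℂ] H := fun x => ∑ y, (p x y : ℂ) • A y

/-- `A ⪯ B` : `A` is a post-processing of `B`. -/
def PP {Ω₁ Ω₂ : Type*} [Fintype Ω₁] [Fintype Ω₂] (A : Ω₁ → H →L[ℂ] H)
    (B : Ω₂ → H →L[ℂ] H) : Prop := ∃ p, IsMarkov p ∧ A = pproc p B

/-- `G` is a joint observable of the observables `A ℓ`. -/
def IsJoint {n : ℕ} {Ω : Fin n → Type*} [∀ ℓ, Fintype (Ω ℓ)] [∀ ℓ, DecidableEq (Ω ℓ)]
    (A : ∀ ℓ, Ω ℓ → H →L[ℂ] H) (G : (∀ ℓ, Ω ℓ) → H →L[ℂ] H) : Prop :=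
  IsObservable G ∧ ∀ ℓ xℓ, (∑ x : ∀ ℓ, Ω ℓ, if x ℓ = xℓ then G x else 0) = A ℓ xℓ

section Chain

variable {S : Type*} [Fintype S] [DecidableEq S]

/-- composition of kernels -/
def mcomp (q p : S → S → ℝ) : S → S → ℝ := fun x y => ∑ z, q x z * p z y

/-- powers of a kernel -/
def mpow (r : S → S → ℝ) : ℕ → S → S → ℝ
  | 0 => fun x y => if x = y then 1 else 0
  | k+1 => mcomp r (mpow r k)

lemma markov_mcomp {q p : S → S → ℝ} (hq : IsMarkov q) (hp : IsMarkov p) :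
    IsMarkov (mcomp q p) := by
  constructor
  · intro x y; exact Finset.sum_nonneg fun z _ => mul_nonneg (hq.1 x z) (hp.1 z y)
  · intro y
    have : ∑ x, mcomp q p x y = ∑ z, (∑ x, q x z) * p z y := by
      calc ∑ x, mcomp q p x y = ∑ x, ∑ z, q x z * p z y := rfl
        _ = ∑ z, ∑ x, q x z * p z y := Finset.sum_comm
        _ = ∑ z, (∑ x, q x z) * p z y := by simp [Finset.sum_mul]
    rw [this]
    simp only [hq.2, one_mul]
    exact hp.2 y

lemma markov_mpow {r : S → S → ℝ} (hr : IsMarkov r) (k : ℕ) : IsMarkov (mpow r k) := by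
  induction k with
  | zero =>
      constructor
      · intro x y; dsimp [mpow]; split <;> norm_num
      · intro y; simp [mpow]
  | succ k ih => exact markov_mcomp hr ih

lemma mpow_nonneg {r : S → S → ℝ} (hr : IsMarkov r) (k : ℕ) (x y : S) : 0 ≤ mpow r k x y :=
  (markov_mpow hr k).1 x y

lemma mcomp_assoc (q p u : S → S → ℝ) : mcomp (mcomp q p) u = mcomp q (mcomp p u) := by
  funext x y
  simp only [mcomp, Finset.sum_mul, Finset.mul_sum]
  rw [Finset.sum_comm]
  simp [mul_assoc]

lemma mcomp_mpow_zero (p : S → S → ℝ) : mcomp (mpow p 0) p = p := by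
  funext x y
  simp [mcomp, mpow, ite_mul]

lemma mpow_add (r : S → S → ℝ) (a b : ℕ) :
    mpow r (a + b) = mcomp (mpow r a) (mpow r b) := by
  induction a with
  | zero =>
      funext x y
      simp [mpow, mcomp, ite_mul]
  | succ a ih =>
      have h1 : a + 1 + b = (a + b) + 1 := by omega
      rw [h1]
      show mcomp r (mpow r (a+b)) = mcomp (mcomp r (mpow r a)) (mpow r b)
      rw [ih, mcomp_assoc]

/-- stationarity of `g` for kernel `r` -/
def Stat (r : S → S → ℝ) (g : S → ℝ) : Prop := ∀ x, ∑ y, r x y * g y = g x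

lemma stat_mcomp {q p : S → S → ℝ} {g : S → ℝ} (hq : Stat q g) (hp : Stat p g) :
    Stat (mcomp q p) g := by
  intro x
  have : ∑ y, mcomp q p x y * g y = ∑ z, q x z * (∑ y, p z y * g y) := by
    simp only [mcomp, Finset.sum_mul, Finset.mul_sum]
    rw [Finset.sum_comm]
    simp [mul_assoc]
  rw [this]
  have hp' : ∀ z, ∑ y, p z y * g y = g z := hp
  simp only [hp']
  exact hq x

lemma stat_mpow {r : S → S → ℝ} {g : S → ℝ} (hr : Stat r g) (k : ℕ) : Stat (mpow r k) g := by
  induction k with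
  | zero =>
      intro x
      show (∑ y, (if x = y then (1:ℝ) else 0) * g y) = g x
      simp [ite_mul]
  | succ k ih => exact stat_mcomp hr ih

/-- reachability: `y ⇝ x` -/
def Reach (r : S → S → ℝ) (y x : S) : Prop := ∃ k, 0 < mpow r k x y

lemma reach_refl (r : S → S → ℝ) (x : S) : Reach r x x := ⟨0, by simp [mpow]⟩

lemma reach_step {r : S → S → ℝ} {x y : S} (h : 0 < r x y) : Reach r y x := by
  refine ⟨1, ?_⟩
  have : mpow r 1 = r := by
    show mcomp r (mpow r 0) = r
    funext a b; simp [mcomp, mpow, mul_ite]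
  rw [this]; exact h

lemma reach_trans {r : S → S → ℝ} (hr : IsMarkov r) {y x w : S}
    (h1 : Reach r y x) (h2 : Reach r x w) : Reach r y w := by
  obtain ⟨k1, hk1⟩ := h1
  obtain ⟨k2, hk2⟩ := h2
  refine ⟨k2 + k1, ?_⟩
  rw [mpow_add]
  have hle : mpow r k2 w x * mpow r k1 x y ≤ mcomp (mpow r k2) (mpow r k1) w y := by
    refine Finset.single_le_sum (f := fun z => mpow r k2 w z * mpow r k1 z y) ?_ (Finset.mem_univ x)
    intro z _; exact mul_nonneg (mpow_nonneg hr k2 w z) (mpow_nonneg hr k1 z y)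
  exact lt_of_lt_of_le (mul_pos hk2 hk1) hle

lemma sum_pos_mem {f : S → ℝ} (h0 : ∀ x, 0 ≤ f x) (h : 0 < ∑ x, f x) : ∃ x, 0 < f x := by
  by_contra hc
  push_neg at hc
  have : ∑ x, f x ≤ 0 := Finset.sum_nonpos fun x _ => hc x
  linarith

lemma mul_pos_split {a b : ℝ} (ha : 0 ≤ a) (hb : 0 ≤ b) (h : 0 < a * b) : 0 < a ∧ 0 < b := by
  constructor
  · rcases ha.lt_or_eq with h' | h'
    · exact h'
    · exfalso; rw [← h'] at h; simp at h
  · rcases hb.lt_or_eq with h' | h'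
    · exact h'
    · exfalso; rw [← h'] at h; simp at h

/-- core mass lemma: no stationary mass flows into a forward-closed set from outside -/
lemma bcore {M : S → S → ℝ} (hM : IsMarkov M) {g : S → ℝ} (hg0 : ∀ x, 0 ≤ g x)
    (hst : Stat M g) {C : Finset S}
    (hCcl : ∀ z ∈ C, ∀ w, 0 < M w z → w ∈ C) {x y : S} (hx : x ∈ C) (hy : y ∉ C)
    (hxy : 0 < M x y) : g y = 0 := by
  have key : ∑ z ∈ C, g z = ∑ y', (∑ z ∈ C, M z y') * g y' := by
    have : ∀ z, g z = ∑ y', M z y' * g y' := fun z => (hst z).symm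
    calc ∑ z ∈ C, g z = ∑ z ∈ C, ∑ y', M z y' * g y' := by
          exact Finset.sum_congr rfl fun z _ => this z
      _ = ∑ y', ∑ z ∈ C, M z y' * g y' := Finset.sum_comm
      _ = ∑ y', (∑ z ∈ C, M z y') * g y' := by simp [Finset.sum_mul]
  have hCsum : ∀ y' ∈ C, (∑ z ∈ C, M z y') = 1 := by
    intro y' hy'
    have h1 : ∑ z, M z y' = 1 := hM.2 y'
    have h2 : ∑ z ∈ C, M z y' = ∑ z, M z y' := by
      refine Finset.sum_subset (Finset.subset_univ C) ?_
      intro z _ hz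
      by_contra hne
      have hpos : 0 < M z y' := lt_of_le_of_ne (hM.1 z y') (Ne.symm hne)
      exact hz (hCcl y' hy' z hpos)
    rw [h2, h1]
  have hsplit : ∑ y', (∑ z ∈ C, M z y') * g y'
      = ∑ y' ∈ C, (∑ z ∈ C, M z y') * g y' + ∑ y' ∈ Cᶜ, (∑ z ∈ C, M z y') * g y' :=
    (Finset.sum_add_sum_compl C _).symm
  have hCC : ∑ y' ∈ C, (∑ z ∈ C, M z y') * g y' = ∑ y' ∈ C, g y' := by
    refine Finset.sum_congr rfl fun y' hy' => by rw [hCsum y' hy', one_mul]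
  have hzero : ∑ y' ∈ Cᶜ, (∑ z ∈ C, M z y') * g y' = 0 := by
    have := key
    rw [hsplit, hCC] at this
    linarith
  have hterm : ∀ y' ∈ Cᶜ, (∑ z ∈ C, M z y') * g y' = 0 :=
    (Finset.sum_eq_zero_iff_of_nonneg (fun i _ =>
      mul_nonneg (Finset.sum_nonneg fun z _ => hM.1 z i) (hg0 i))).mp hzero
  have hy' : y ∈ Cᶜ := Finset.mem_compl.mpr hy
  have h1 : (∑ z ∈ C, M z y) * g y = 0 := hterm y hy'
  have h2 : 0 < ∑ z ∈ C, M z y := by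
    refine lt_of_lt_of_le hxy ?_
    exact Finset.single_le_sum (fun z _ => hM.1 z y) hx
  have := mul_eq_zero.mp h1
  rcases this with h | h
  · exact absurd h (ne_of_gt h2)
  · exact h

/-- forward positivity of stationary measures -/
lemma fwdpos {r : S → S → ℝ} (hr : IsMarkov r) {g : S → ℝ} (hg0 : ∀ x, 0 ≤ g x)
    (hst : Stat r g) {y z : S} (hyz : Reach r y z) (hy : 0 < g y) : 0 < g z := by
  obtain ⟨k, hk⟩ := hyz
  have h1 : mpow r k z y * g y ≤ ∑ w, mpow r k z w * g w :=
    Finset.single_le_sum (fun w _ => mul_nonneg (mpow_nonneg hr k z w) (hg0 w)) (Finset.mem_univ y)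
  have h2 : ∑ w, mpow r k z w * g w = g z := stat_mpow hst k z
  calc (0:ℝ) < mpow r k z y * g y := mul_pos hk hy
    _ ≤ ∑ w, mpow r k z w * g w := h1
    _ = g z := h2

/-- stationary measures vanish on non-recurrent states -/
lemma transient_zero {r : S → S → ℝ} (hr : IsMarkov r) {g : S → ℝ} (hg0 : ∀ x, 0 ≤ g x)
    (hst : Stat r g) {x y : S} (hxy : Reach r y x) (hyx : ¬ Reach r x y) : g y = 0 := by
  classical
  obtain ⟨k, hk⟩ := hxy
  set C : Finset S := Finset.univ.filter (fun z => Reach r x z) with hC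
  have hmem : ∀ z, z ∈ C ↔ Reach r x z := by
    intro z; simp [hC]
  have hCcl : ∀ z ∈ C, ∀ w, 0 < mpow r k w z → w ∈ C := by
    intro z hz w hw
    rw [hmem] at hz ⊢
    exact reach_trans hr hz ⟨k, hw⟩
  exact bcore (markov_mpow hr k) hg0 (stat_mpow hst k) hCcl
    ((hmem x).mpr (reach_refl r x)) (fun hc => hyx ((hmem y).mp hc)) hk

/-- forward positivity inside a forward-closed set, for restrictedly-stationary `f` -/
lemma fwdpos_restricted {r : S → S → ℝ} (hr : IsMarkov r) {R : Finset S}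
    (hRcl : ∀ z ∈ R, ∀ w, 0 < r w z → w ∈ R) {f : S → ℝ}
    (hf0 : ∀ z ∈ R, 0 ≤ f z) (hfst : ∀ z ∈ R, ∑ y ∈ R, r z y * f y = f z) :
    ∀ k (y z : S), y ∈ R → 0 < f y → 0 < mpow r k z y → z ∈ R ∧ 0 < f z := by
  intro k
  induction k with
  | zero =>
      intro y z hy hfy hp
      have : z = y := by
        by_contra hne
        simp [mpow, hne] at hp
      subst this
      exact ⟨hy, hfy⟩
  | succ k ih =>
      intro y z hy hfy hp
      have hp' : 0 < ∑ w, r z w * mpow r k w y := hp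
      obtain ⟨w, hw⟩ := sum_pos_mem
        (fun w => mul_nonneg (hr.1 z w) (mpow_nonneg hr k w y)) hp'
      obtain ⟨hzw, hwk⟩ := mul_pos_split (hr.1 z w) (mpow_nonneg hr k w y) hw
      obtain ⟨hwR, hfw⟩ := ih y w hy hfy hwk
      have hzR : z ∈ R := hRcl w hwR z hzw
      refine ⟨hzR, ?_⟩
      have h1 : r z w * f w ≤ ∑ v ∈ R, r z v * f v :=
        Finset.single_le_sum (fun v hv => mul_nonneg (hr.1 z v) (hf0 v hv)) hwR
      have h2 : ∑ v ∈ R, r z v * f v = f z := hfst z hzR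
      calc (0:ℝ) < r z w * f w := mul_pos hzw hfw
        _ ≤ ∑ v ∈ R, r z v * f v := h1
        _ = f z := h2

/-- pairwise proportionality of stationary measures on a recurrent class -/
lemma pairwise_dep {r : S → S → ℝ} (hr : IsMarkov r) {g h : S → ℝ}
    (hg0 : ∀ z, 0 ≤ g z) (hgst : Stat r g)
    (hh0 : ∀ z, 0 ≤ h z) (hhst : Stat r h)
    {x1 x2 : S} (h12 : Reach r x1 x2)
    (hrec1 : ∀ w, Reach r x1 w → Reach r w x1) :
    g x1 * h x2 = g x2 * h x1 := by
  classical
  set R : Finset S := Finset.univ.filter (fun z => Reach r x1 z) with hRdef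
  have hmem : ∀ z, z ∈ R ↔ Reach r x1 z := by intro z; simp [hRdef]
  have hx1R : x1 ∈ R := (hmem x1).mpr (reach_refl r x1)
  have hx2R : x2 ∈ R := (hmem x2).mpr h12
  have hRcl : ∀ z ∈ R, ∀ w, 0 < r w z → w ∈ R := by
    intro z hz w hw
    rw [hmem] at hz ⊢
    exact reach_trans hr hz (reach_step hw)
  have hRR : ∀ z ∈ R, ∀ w ∈ R, Reach r z w := by
    intro z hz w hwm
    exact reach_trans hr (hrec1 z ((hmem z).mp hz)) ((hmem w).mp hwm)
  -- restricted stationarity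
  have hres : ∀ (f : S → ℝ), (∀ z, 0 ≤ f z) → Stat r f →
      ∀ z ∈ R, ∑ y ∈ R, r z y * f y = f z := by
    intro f hf0 hfst z hz
    have hfull : ∑ y, r z y * f y = f z := hfst z
    have hcompl : ∑ y ∈ Rᶜ, r z y * f y = 0 := by
      refine Finset.sum_eq_zero ?_
      intro y hy
      have hyR : y ∉ R := Finset.mem_compl.mp hy
      rcases (hr.1 z y).lt_or_eq with hpos | hzero
      · have : f y = 0 := bcore hr hf0 hfst hRcl hz hyR hpos
        rw [this, mul_zero]
      · rw [← hzero, zero_mul]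
    have := Finset.sum_add_sum_compl R (fun y => r z y * f y)
    rw [hcompl, add_zero] at this
    rw [this]; exact hfull
  by_cases hallh : ∀ y ∈ R, h y = 0
  · rw [hallh x1 hx1R, hallh x2 hx2R]; ring
  · push_neg at hallh
    obtain ⟨y0, hy0R, hy0⟩ := hallh
    have hy0pos : 0 < h y0 := lt_of_le_of_ne (hh0 y0) (Ne.symm hy0)
    have hpos : ∀ z ∈ R, 0 < h z := fun z hz =>
      fwdpos hr hh0 hhst (hRR y0 hy0R z hz) hy0pos
    obtain ⟨zs, hzs, hminzs⟩ := Finset.exists_min_image R (fun z => g z / h z) ⟨x1, hx1R⟩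
    set t : ℝ := g zs / h zs with ht
    set f : S → ℝ := fun z => g z - t * h z with hf
    have hf0R : ∀ z ∈ R, 0 ≤ f z := by
      intro z hz
      have h1 : g zs / h zs ≤ g z / h z := hminzs z hz
      have h2 : g zs * h z ≤ g z * h zs := (div_le_div_iff₀ (hpos zs hzs) (hpos z hz)).mp h1
      have h3 : t * h z ≤ g z := by
        rw [ht, div_mul_eq_mul_div, div_le_iff₀ (hpos zs hzs)]
        linarith
      simp [hf]; linarith
    have hfres : ∀ z ∈ R, ∑ y ∈ R, r z y * f y = f z := by
      intro z hz
      have hg' := hres g hg0 hgst z hz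
      have hh' := hres h hh0 hhst z hz
      simp only [hf, mul_sub]
      rw [Finset.sum_sub_distrib]
      have : ∑ y ∈ R, r z y * (t * h y) = t * ∑ y ∈ R, r z y * h y := by
        rw [Finset.mul_sum]
        exact Finset.sum_congr rfl fun y _ => by ring
      rw [this, hg', hh']
    have hfzs : f zs = 0 := by
      have hzsne : h zs ≠ 0 := ne_of_gt (hpos zs hzs)
      simp only [hf, ht]
      rw [div_mul_cancel₀ _ hzsne, sub_self]
    have hfzero : ∀ z ∈ R, f z = 0 := by
      intro z hz
      refine le_antisymm ?_ (hf0R z hz)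
      by_contra hc
      push_neg at hc
      obtain ⟨k, hk⟩ := hRR z hz zs hzs
      have := (fwdpos_restricted hr hRcl hf0R hfres k z zs hz hc hk).2
      rw [hfzs] at this
      exact lt_irrefl 0 this
    have e1 : g x1 = t * h x1 := by
      have := hfzero x1 hx1R; simp [hf] at this; linarith
    have e2 : g x2 = t * h x2 := by
      have := hfzero x2 hx2R; simp [hf] at this; linarith
    rw [e1, e2]; ring

end Chain

section Op

local notation "⟪" x ", " y "⟫" => @inner ℂ _ _ x y

/-- a selfadjoint operator with vanishing real quadratic form is zero -/
lemma selfadj_eq_zero {T : H →L[ℂ] H} (hsa : IsSelfAdjoint T)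
    (h : ∀ v : H, (⟪v, T v⟫).re = 0) : T = 0 := by
  have hsym : (T : H →ₗ[ℂ] H).IsSymmetric :=
    (ContinuousLinearMap.isSelfAdjoint_iff_isSymmetric).mp hsa
  have hz : ∀ v : H, ⟪T v, v⟫ = 0 := by
    intro v
    have h1 : ⟪T v, v⟫ = ⟪v, T v⟫ := hsym v v
    have h2 : (starRingEnd ℂ) ⟪T v, v⟫ = ⟪v, T v⟫ := inner_conj_symm _ _
    have h3 : (starRingEnd ℂ) ⟪v, T v⟫ = ⟪v, T v⟫ := by
      conv_lhs => rw [← h1]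
      exact h2
    have h4 : (⟪v, T v⟫ : ℂ).im = 0 := by
      have h5 := congrArg Complex.im h3
      rw [Complex.conj_im] at h5
      linarith
    have h5 : (⟪v, T v⟫ : ℂ) = 0 := Complex.ext (h v) h4
    rw [h1, h5]
  have h6 : (T : H →ₗ[ℂ] H) = 0 := (inner_map_self_eq_zero _).mp hz
  ext v
  exact LinearMap.congr_fun h6 v

lemma pos_re_nonneg {T : H →L[ℂ] H} (hT : T.IsPositive) (v : H) :
    0 ≤ (⟪v, T v⟫).re := by
  have h1 := hT.2 v
  rw [ContinuousLinearMap.reApplyInnerSelf_apply] at h1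
  have h2 : ⟪v, T v⟫ = (starRingEnd ℂ) ⟪T v, v⟫ := (inner_conj_symm _ _).symm
  rw [h2, Complex.conj_re]
  exact h1

lemma pos_inner_real {T : H →L[ℂ] H} (hsa : IsSelfAdjoint T) (v : H) :
    ⟪v, T v⟫ = ((⟪v, T v⟫).re : ℂ) := by
  have hsym : (T : H →ₗ[ℂ] H).IsSymmetric :=
    (ContinuousLinearMap.isSelfAdjoint_iff_isSymmetric).mp hsa
  have h1 : ⟪T v, v⟫ = ⟪v, T v⟫ := hsym v v
  have h2 : (starRingEnd ℂ) ⟪T v, v⟫ = ⟪v, T v⟫ := inner_conj_symm _ _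
  have h3 : (starRingEnd ℂ) ⟪v, T v⟫ = ⟪v, T v⟫ := by
    conv_lhs => rw [← h1]
    exact h2
  have h4 : (⟪v, T v⟫ : ℂ).im = 0 := by
    have h5 := congrArg Complex.im h3
    rw [Complex.conj_im] at h5
    linarith
  exact Complex.ext rfl h4

/-- positive operators that are linearly dependent are positive real multiples
of one another, normalized by their norms -/
lemma dep_smul_norm {T U : H →L[ℂ] H} (hT : T.IsPositive) (hU : U.IsPositive)
    (hdep : ¬ LinearIndependent ℂ ![T, U]) :
    ((‖T‖ : ℝ) : ℂ) • U = ((‖U‖ : ℝ) : ℂ) • T := by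
  by_cases hT0 : T = 0
  · simp [hT0]
  by_cases hU0 : U = 0
  · simp [hU0]
  obtain ⟨c, hc, hci⟩ := Fintype.not_linearIndependent_iff.mp hdep
  rw [Fin.sum_univ_two] at hc
  simp only [Matrix.cons_val_zero, Matrix.cons_val_one, Matrix.head_cons] at hc
  -- hc : c 0 • T + c 1 • U = 0
  have hc0 : c 0 ≠ 0 := by
    intro h0
    rw [h0, zero_smul, zero_add] at hc
    rcases smul_eq_zero.mp hc with h | h
    · obtain ⟨i, hi⟩ := hci
      fin_cases i
      · exact hi h0
      · exact hi h
    · exact hU0 h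
  have h1 : c 0 • T = (-(c 1)) • U := by
    rw [add_eq_zero_iff_eq_neg] at hc
    rw [hc, neg_smul]
  have hTU : T = (-(c 1) / c 0) • U := by
    calc T = (c 0)⁻¹ • (c 0 • T) := by rw [smul_smul, inv_mul_cancel₀ hc0, one_smul]
      _ = (c 0)⁻¹ • ((-(c 1)) • U) := by rw [h1]
      _ = (-(c 1) / c 0) • U := by rw [smul_smul]; congr 1; field_simp
  set cc : ℂ := -(c 1) / c 0 with hccdef
  have hccne : cc ≠ 0 := by
    intro h0
    rw [h0, zero_smul] at hTU
    exact hT0 hTU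
  have hv : ∃ v : H, 0 < (⟪v, U v⟫).re := by
    by_contra hcon
    push_neg at hcon
    have : ∀ v : H, (⟪v, U v⟫).re = 0 := fun v =>
      le_antisymm (hcon v) (pos_re_nonneg hU v)
    exact hU0 (selfadj_eq_zero hU.isSelfAdjoint this)
  obtain ⟨v, hv⟩ := hv
  set u : ℝ := (⟪v, U v⟫).re with hu
  set t' : ℝ := (⟪v, T v⟫).re with ht'
  have ht'0 : 0 ≤ t' := pos_re_nonneg hT v
  have e1 : ⟪v, T v⟫ = cc * ⟪v, U v⟫ := by
    rw [hTU, ContinuousLinearMap.smul_apply, inner_smul_right]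
  have heq : (t' : ℂ) = cc * (u : ℂ) := by
    rw [ht', hu, ← pos_inner_real hT.isSelfAdjoint v, ← pos_inner_real hU.isSelfAdjoint v]
    exact e1
  have hune : (u : ℂ) ≠ 0 := by
    exact_mod_cast ne_of_gt hv
  have hcc : cc = ((t' / u : ℝ) : ℂ) := by
    push_cast
    rw [heq]
    field_simp
  set α : ℝ := t' / u with hα
  have hα0 : 0 ≤ α := div_nonneg ht'0 (le_of_lt hv)
  have hnorm : ‖T‖ = α * ‖U‖ := by
    rw [hTU, hcc, norm_smul]
    simp [abs_of_nonneg hα0]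
  have goal2 : ((α * ‖U‖ : ℝ) : ℂ) • U = ((‖U‖ : ℝ) : ℂ) • (((α : ℝ) : ℂ) • U) := by
    rw [smul_smul]
    congr 1
    push_cast
    ring
  rw [hnorm, hTU, hcc]
  exact goal2

end Op

lemma pproc_mcomp {S : Type*} [Fintype S] (q p : S → S → ℝ) (B : S → H →L[ℂ] H) :
    pproc q (pproc p B) = pproc (mcomp q p) B := by
  funext x
  show ∑ y, (q x y : ℂ) • (∑ z, (p y z : ℂ) • B z) = ∑ z, ((mcomp q p x z : ℝ) : ℂ) • B z
  calc ∑ y, (q x y:ℂ) • ∑ z, (p y z:ℂ) • B z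
      = ∑ y, ∑ z, ((q x y * p y z : ℝ):ℂ) • B z := by
        refine Finset.sum_congr rfl fun y _ => ?_
        rw [Finset.smul_sum]
        refine Finset.sum_congr rfl fun z _ => ?_
        rw [smul_smul]
        norm_cast
    _ = ∑ z, ∑ y, ((q x y * p y z : ℝ):ℂ) • B z := Finset.sum_comm
    _ = ∑ z, ((mcomp q p x z : ℝ):ℂ) • B z := by
        refine Finset.sum_congr rfl fun z _ => ?_
        rw [← Finset.sum_smul]
        congr 1
        show _ = ((∑ w, q x w * p w z : ℝ) : ℂ)
        push_cast
        rfl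


/-- A joint observable `G` is minimal iff no kernel in `K_G` mixes two linearly
independent effects of `G`. -/
theorem minimal_iff_no_mixing {n : ℕ} {Ω : Fin n → Type*}
    [∀ ℓ, Fintype (Ω ℓ)] [∀ ℓ, DecidableEq (Ω ℓ)]
    (A : ∀ ℓ, Ω ℓ → H →L[ℂ] H) (G : (∀ ℓ, Ω ℓ) → H →L[ℂ] H)
    (hG : IsJoint A G) :
    (∀ G' : (∀ ℓ, Ω ℓ) → H →L[ℂ] H, IsJoint A G' → PP G' G → PP G G') ↔
    ∀ p : (∀ ℓ, Ω ℓ) → (∀ ℓ, Ω ℓ) → ℝ, IsMarkov p → IsJoint A (pproc p G) →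
      ∀ x1 x2 x' : ∀ ℓ, Ω ℓ, LinearIndependent ℂ ![G x1, G x2] →
        p x' x1 * p x' x2 = 0 := by
  classical
  have hGpos : ∀ x, (G x).IsPositive := hG.1.1
  constructor
  · -- minimal → no mixing
    intro hmin p hp hpJ x1 x2 x' hLI
    by_contra hne
    have hp1 : 0 < p x' x1 := by
      rcases (hp.1 x' x1).lt_or_eq with h | h
      · exact h
      · exact absurd (by rw [← h, zero_mul]) hne
    have hp2 : 0 < p x' x2 := by
      rcases (hp.1 x' x2).lt_or_eq with h | h
      · exact h
      · exact absurd (by rw [← h, mul_zero]) hne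
    obtain ⟨q, hq, hGq⟩ := hmin (pproc p G) hpJ ⟨p, hp, rfl⟩
    rw [pproc_mcomp] at hGq
    set r := mcomp q p with hrdef
    have hr : IsMarkov r := markov_mcomp hq hp
    have hGr : ∀ z, G z = ∑ y, ((r z y : ℝ):ℂ) • G y := fun z => congrFun hGq z
    obtain ⟨x, hx⟩ := sum_pos_mem (fun z => hq.1 z x') (by rw [hq.2 x']; norm_num)
    have hx1 : 0 < r x x1 := by
      have hle : q x x' * p x' x1 ≤ r x x1 :=
        Finset.single_le_sum (f := fun z => q x z * p z x1)
          (fun z _ => mul_nonneg (hq.1 x z) (hp.1 z x1)) (Finset.mem_univ x')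
      exact lt_of_lt_of_le (mul_pos hx hp1) hle
    have hx2 : 0 < r x x2 := by
      have hle : q x x' * p x' x2 ≤ r x x2 :=
        Finset.single_le_sum (f := fun z => q x z * p z x2)
          (fun z _ => mul_nonneg (hq.1 x z) (hp.1 z x2)) (Finset.mem_univ x')
      exact lt_of_lt_of_le (mul_pos hx hp2) hle
    -- quadratic forms are stationary nonneg measures
    have hg0 : ∀ (v : H) y, 0 ≤ (@inner ℂ _ _ v (G y v)).re := fun v y =>
      pos_re_nonneg (hGpos y) v
    have hgst : ∀ (v : H), Stat r (fun y => (@inner ℂ _ _ v (G y v)).re) := by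
      intro v z
      have h1 : G z v = ∑ y, ((r z y:ℝ):ℂ) • G y v := by
        rw [hGr z]
        simp
      have h2 : (@inner ℂ _ _ v (G z v)) = ∑ y, ((r z y:ℝ):ℂ) * (@inner ℂ _ _ v (G y v)) := by
        rw [h1, inner_sum]
        exact Finset.sum_congr rfl fun y _ => inner_smul_right _ _ _
      have h3 := congrArg Complex.re h2
      rw [Complex.re_sum] at h3
      simp only [Complex.mul_re, Complex.ofReal_re, Complex.ofReal_im, zero_mul,
        sub_zero] at h3
      exact h3.symm
    by_cases hrec1 : ∀ w, Reach r x1 w → Reach r w x1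
    · by_cases hrec2 : ∀ w, Reach r x2 w → Reach r w x2
      · -- both recurrent, common successor x
        have h12 : Reach r x1 x2 :=
          reach_trans hr (reach_step hx1) (hrec2 x (reach_step hx2))
        have hpair : ∀ v w : H,
            (@inner ℂ _ _ v (G x1 v)).re * (@inner ℂ _ _ w (G x2 w)).re
              = (@inner ℂ _ _ v (G x2 v)).re * (@inner ℂ _ _ w (G x1 w)).re :=
          fun v w => pairwise_dep hr (hg0 v) (hgst v) (hg0 w) (hgst w) h12 hrec1
        by_cases hall : ∀ w : H,
            (@inner ℂ _ _ w (G x1 w)).re = 0 ∧ (@inner ℂ _ _ w (G x2 w)).re = 0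
        · have hG1 : G x1 = 0 := selfadj_eq_zero (hGpos x1).isSelfAdjoint (fun v => (hall v).1)
          exact (hLI.ne_zero 0) (by rw [Matrix.cons_val_zero]; exact hG1)
        · push_neg at hall
          obtain ⟨w0, hw0⟩ := hall
          set a' : ℝ := (@inner ℂ _ _ w0 (G x1 w0)).re with ha'
          set b' : ℝ := (@inner ℂ _ _ w0 (G x2 w0)).re with hb'
          have hab : ¬ (b' = 0 ∧ a' = 0) := fun ⟨h1', h2'⟩ => (hw0 h2') h1'
          have hTre : ∀ v : H,
              (@inner ℂ _ _ v ((((b':ℝ):ℂ) • G x1 - ((a':ℝ):ℂ) • G x2) v)).re = 0 := by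
            intro v
            have hpv := hpair v w0
            have hv1 : (((b':ℝ):ℂ) • G x1 - ((a':ℝ):ℂ) • G x2) v
                = ((b':ℝ):ℂ) • G x1 v - ((a':ℝ):ℂ) • G x2 v := by simp
            rw [hv1, inner_sub_right, inner_smul_right, inner_smul_right]
            simp only [Complex.sub_re, Complex.mul_re, Complex.ofReal_re,
              Complex.ofReal_im, zero_mul, sub_zero]
            linear_combination hpv
          have hTsa : IsSelfAdjoint (((b':ℝ):ℂ) • G x1 - ((a':ℝ):ℂ) • G x2) := by
            have hsa1 : IsSelfAdjoint ((b':ℝ):ℂ) := by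
              show star ((b':ℝ):ℂ) = ((b':ℝ):ℂ)
              rw [RCLike.star_def, Complex.conj_ofReal]
            have hsa2 : IsSelfAdjoint ((a':ℝ):ℂ) := by
              show star ((a':ℝ):ℂ) = ((a':ℝ):ℂ)
              rw [RCLike.star_def, Complex.conj_ofReal]
            exact IsSelfAdjoint.sub (hsa1.smul (hGpos x1).isSelfAdjoint) (hsa2.smul (hGpos x2).isSelfAdjoint)
          have hT0 : (((b':ℝ):ℂ) • G x1 - ((a':ℝ):ℂ) • G x2) = 0 :=
            selfadj_eq_zero hTsa hTre
          have hcoef := Fintype.linearIndependent_iff.mp hLI ![((b':ℝ):ℂ), -((a':ℝ):ℂ)] ?_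
          · have hb0 : b' = 0 := by
              have := hcoef 0
              simp only [Matrix.cons_val_zero] at this
              exact_mod_cast this
            have ha0 : a' = 0 := by
              have := hcoef 1
              simp only [Matrix.cons_val_one, Matrix.head_cons, Matrix.cons_val_zero, neg_eq_zero] at this
              exact_mod_cast this
            exact hab ⟨hb0, ha0⟩
          · rw [Fin.sum_univ_two]
            simp only [Matrix.cons_val_zero, Matrix.cons_val_one, Matrix.head_cons,
              neg_smul, ← sub_eq_add_neg]
            exact hT0
      · push_neg at hrec2
        obtain ⟨w, hw1, hw2⟩ := hrec2
        have hG2 : G x2 = 0 := selfadj_eq_zero (hGpos x2).isSelfAdjoint (fun v =>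
          transient_zero hr (hg0 v) (hgst v) hw1 hw2)
        exact (hLI.ne_zero 1) (by rw [Matrix.cons_val_one, Matrix.cons_val_zero]; exact hG2)
    · push_neg at hrec1
      obtain ⟨w, hw1, hw2⟩ := hrec1
      have hG1 : G x1 = 0 := selfadj_eq_zero (hGpos x1).isSelfAdjoint (fun v =>
        transient_zero hr (hg0 v) (hgst v) hw1 hw2)
      exact (hLI.ne_zero 0) (by rw [Matrix.cons_val_zero]; exact hG1)
  · -- no mixing → minimal
    intro hmix G' hG'J hPP
    obtain ⟨p, hp, hG'eq⟩ := hPP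
    subst hG'eq
    have hnomix := hmix p hp hG'J
    rcases isEmpty_or_nonempty (∀ ℓ, Ω ℓ) with hE | hNE
    · exact ⟨fun _ _ => 0, ⟨fun x y => le_refl 0, fun y => (hE.false y).elim⟩,
        funext fun x => (hE.false x).elim⟩
    obtain ⟨x0⟩ := hNE
    set ν : (∀ ℓ, Ω ℓ) → ℝ := fun x' => ∑ y, p x' y * ‖G y‖ with hνdef
    set q : (∀ ℓ, Ω ℓ) → (∀ ℓ, Ω ℓ) → ℝ :=
      fun x x' => if 0 < ν x' then p x' x * ‖G x‖ / ν x' else (if x = x0 then 1 else 0)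
      with hqdef
    have hν0 : ∀ x', 0 ≤ ν x' := fun x' =>
      Finset.sum_nonneg fun y _ => mul_nonneg (hp.1 x' y) (norm_nonneg _)
    have hqpos : ∀ x x', 0 < ν x' → q x x' = p x' x * ‖G x‖ / ν x' := by
      intro x x' h
      simp only [hqdef]
      rw [if_pos h]
    have hqneg : ∀ x x', ¬ 0 < ν x' → q x x' = if x = x0 then 1 else 0 := by
      intro x x' h
      simp only [hqdef]
      rw [if_neg h]
    have hqM : IsMarkov q := by
      constructor
      · intro x x'
        by_cases h : 0 < ν x'
        · rw [hqpos x x' h]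
          exact div_nonneg (mul_nonneg (hp.1 x' x) (norm_nonneg _)) (le_of_lt h)
        · rw [hqneg x x' h]
          split <;> norm_num
      · intro x'
        by_cases h : 0 < ν x'
        · calc ∑ x, q x x' = ∑ x, p x' x * ‖G x‖ / ν x' :=
                Finset.sum_congr rfl (fun x _ => hqpos x x' h)
            _ = (∑ x, p x' x * ‖G x‖) / ν x' := by rw [Finset.sum_div]
            _ = ν x' / ν x' := by rw [hνdef]
            _ = 1 := div_self (ne_of_gt h)
        · rw [Finset.sum_congr rfl (fun x _ => hqneg x x' h)]
          simp
    refine ⟨q, hqM, ?_⟩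
    funext x
    have hterm : ∀ x', (q x x' : ℂ) • pproc p G x' = ((p x' x : ℝ):ℂ) • G x := by
      intro x'
      by_cases hpos : 0 < ν x'
      · by_cases hGx : G x = 0
        · rw [hqpos x x' hpos, hGx]
          simp
        by_cases hpx : p x' x = 0
        · rw [hqpos x x' hpos, hpx]
          simp
        have hpx' : 0 < p x' x := lt_of_le_of_ne (hp.1 x' x) (Ne.symm hpx)
        have hGnorm : 0 < ‖G x‖ := norm_pos_iff.mpr hGx
        have key : ((‖G x‖ : ℝ):ℂ) • pproc p G x' = ((ν x' : ℝ):ℂ) • G x := by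
          show ((‖G x‖ : ℝ):ℂ) • ∑ y, (p x' y : ℂ) • G y = _
          rw [Finset.smul_sum]
          have hy : ∀ y, ((‖G x‖ : ℝ):ℂ) • ((p x' y : ℂ) • G y)
              = ((p x' y * ‖G y‖ : ℝ):ℂ) • G x := by
            intro y
            rcases (hp.1 x' y).lt_or_eq with hpy | hpy
            · have hdep : ¬ LinearIndependent ℂ ![G x, G y] := by
                intro hLI
                exact absurd (hnomix x y x' hLI) (ne_of_gt (mul_pos hpx' hpy))
              have hkey := dep_smul_norm (hGpos x) (hGpos y) hdep
              rw [smul_comm, hkey, smul_smul]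
              norm_cast
            · rw [← hpy]
              simp
          rw [Finset.sum_congr rfl (fun y _ => hy y), ← Finset.sum_smul]
          congr 1
          rw [hνdef]
          push_cast
          rfl
        have hstep := congrArg (fun T => ((p x' x / ν x' : ℝ):ℂ) • T) key
        rw [smul_smul, smul_smul] at hstep
        have hc1 : ((p x' x / ν x' : ℝ):ℂ) * ((‖G x‖ : ℝ):ℂ) = ((q x x' : ℝ):ℂ) := by
          rw [hqpos x x' hpos]
          push_cast
          ring
        have hc2 : ((p x' x / ν x' : ℝ):ℂ) * ((ν x' : ℝ):ℂ) = ((p x' x : ℝ):ℂ) := by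
          have hne' : ((ν x' : ℝ):ℂ) ≠ 0 := by exact_mod_cast ne_of_gt hpos
          push_cast
          rw [div_mul_eq_mul_div, mul_div_assoc, div_self hne', mul_one]
        rw [hc1, hc2] at hstep
        exact hstep
      · have hνz : ν x' = 0 := le_antisymm (not_lt.mp hpos) (hν0 x')
        have hterms : ∀ y, p x' y * ‖G y‖ = 0 := by
          intro y
          have h1 : ∑ y, p x' y * ‖G y‖ = 0 := hνz
          exact (Finset.sum_eq_zero_iff_of_nonneg
            (fun y _ => mul_nonneg (hp.1 x' y) (norm_nonneg _))).mp h1 y (Finset.mem_univ y)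
        have hP0 : pproc p G x' = 0 := by
          show ∑ y, (p x' y : ℂ) • G y = 0
          refine Finset.sum_eq_zero fun y _ => ?_
          rcases mul_eq_zero.mp (hterms y) with h | h
          · rw [h]; simp
          · rw [norm_eq_zero.mp h]; simp
        rw [hP0, smul_zero]
        rcases mul_eq_zero.mp (hterms x) with h | h
        · rw [h]; simp
        · rw [norm_eq_zero.mp h]; simp
    show G x = ∑ x', (q x x' : ℂ) • pproc p G x'
    rw [Finset.sum_congr rfl (fun x' _ => hterm x')]
    rw [← Finset.sum_smul]
    have hone : (∑ x', ((p x' x : ℝ):ℂ)) = 1 := by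
      norm_cast
      exact hp.2 x
    rw [hone, one_smul]
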